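/- arXiv:2004.09468 — 5 statements merged into one kernel-verified Lean document; each statement's English description precedes it below -/
import Mathlib

section
/- Let C_1, …, C_r together with optimal mixed strategies p_1, …, p_r be a Nash clustering of a finite symmetric zero-sum game (Π, f). Then for all indices i < j ≤ r, the relative population performance satisfies RPP(C_i, C_j) ≥ 0; in particular, the mixed strategy p_i (which is supported on C_i) satisfies f(p_i, q) ≥ 0 for every mixed strategy q on C_j. -/
/-- A mixed strategy supported on the subset `A`. -/
def IsMixedOn {G : Type*} [Fintype G] (A : Set G) (p : G → ℝ) : Prop :=
  (∀ x, 0 ≤ p x) ∧ (∀ x, x ∉ A → p x = 0) ∧ ∑ x, p x = 1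

/-- Payoff of mixed strategy `p` against mixed strategy `q`. -/
noncomputable def payMM {G : Type*} [Fintype G] (f : G → G → ℝ) (p q : G → ℝ) : ℝ :=
  ∑ x, ∑ y, p x * q y * f x y

/-- Payoff of mixed strategy `p` against pure strategy `y`. -/
noncomputable def payMP {G : Type*} [Fintype G] (f : G → G → ℝ) (p : G → ℝ) (y : G) : ℝ :=
  ∑ x, p x * f x y

/-- `p` is an optimal (symmetric Nash) mixed strategy for the game restricted to `A`. -/
def IsOptimalOn {G : Type*} [Fintype G] (f : G → G → ℝ) (A : Set G) (p : G → ℝ) : Prop :=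
  IsMixedOn A p ∧ ∀ y ∈ A, 0 ≤ payMP f p y

/-- Support of a mixed strategy. -/
def supp {G : Type*} (p : G → ℝ) : Set G := {x | 0 < p x}

/-- Relative population performance of `A` against `B`. -/
noncomputable def RPP {G : Type*} [Fintype G] (f : G → G → ℝ) (A B : Set G) : ℝ :=
  sSup ((fun p => sInf ((fun q => payMM f p q) '' {q | IsMixedOn B q})) '' {p | IsMixedOn A p})

lemma mixed_le_one {G : Type*} [Fintype G] {A : Set G} {p : G → ℝ}
    (hp : IsMixedOn A p) (x : G) : p x ≤ 1 := by
  have := Finset.single_le_sum (f := p) (fun y _ => hp.1 y) (Finset.mem_univ x)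
  simpa [hp.2.2] using this

lemma payMM_abs_le {G : Type*} [Fintype G] (f : G → G → ℝ) {A B : Set G} {p q : G → ℝ}
    (hp : IsMixedOn A p) (hq : IsMixedOn B q) :
    |payMM f p q| ≤ ∑ x, ∑ y, |f x y| := by
  unfold payMM
  calc |∑ x, ∑ y, p x * q y * f x y| ≤ ∑ x, |∑ y, p x * q y * f x y| :=
        Finset.abs_sum_le_sum_abs _ _
    _ ≤ ∑ x, ∑ y, |p x * q y * f x y| := by
        apply Finset.sum_le_sum
        intro x _
        exact Finset.abs_sum_le_sum_abs _ _
    _ ≤ ∑ x, ∑ y, |f x y| := by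
        apply Finset.sum_le_sum; intro x _
        apply Finset.sum_le_sum; intro y _
        rw [abs_mul, abs_mul]
        calc |p x| * |q y| * |f x y| ≤ 1 * 1 * |f x y| := by
              apply mul_le_mul_of_nonneg_right _ (abs_nonneg _)
              exact mul_le_mul (by rw [abs_of_nonneg (hp.1 x)]; exact mixed_le_one hp x)
                (by rw [abs_of_nonneg (hq.1 y)]; exact mixed_le_one hq y) (abs_nonneg _)
                zero_le_one
          _ = |f x y| := by ring

lemma payMM_eq_sum {G : Type*} [Fintype G] (f : G → G → ℝ) (p q : G → ℝ) :
    payMM f p q = ∑ y, q y * payMP f p y := by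
  unfold payMM payMP
  rw [Finset.sum_comm]
  refine Finset.sum_congr rfl fun y _ => ?_
  rw [Finset.mul_sum]
  exact Finset.sum_congr rfl fun x _ => by ring

/-- In a Nash clustering of a finite symmetric zero-sum game, for all
indices i < j, RPP(C_i, C_j) ≥ 0; in particular p_i gets nonnegative payoff against
every mixed strategy on C_j. -/
theorem nash_clustering_rpp_nonneg
    {G : Type*} [Fintype G] [Nonempty G]
    (f : G → G → ℝ) (hf : ∀ x y, f x y = - f y x)
    (r : ℕ) (C : Fin r → Set G) (p : Fin r → G → ℝ)
    (hne : ∀ i, (C i).Nonempty)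
    (hdisj : ∀ i j, i ≠ j → Disjoint (C i) (C j))
    (hcover : ⋃ i, C i = Set.univ)
    (hopt : ∀ i : Fin r, IsOptimalOn f (Set.univ \ ⋃ j, ⋃ (_ : j < i), C j) (p i))
    (hsupp : ∀ i, C i = supp (p i)) :
    ∀ i j : Fin r, i < j →
      0 ≤ RPP f (C i) (C j) ∧
      ∀ q : G → ℝ, IsMixedOn (C j) q → 0 ≤ payMM f (p i) q := by
  classical
  intro i j hij
  set A : Set G := Set.univ \ ⋃ k, ⋃ (_ : k < i), C k with hA
  obtain ⟨hmixA, hoptA⟩ := hopt i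
  -- C j ⊆ A
  have hCjA : C j ⊆ A := by
    intro x hx
    refine ⟨trivial, ?_⟩
    intro hmem
    simp only [Set.mem_iUnion] at hmem
    obtain ⟨k, hki, hxk⟩ := hmem
    exact (hdisj j k (by intro h; subst h; exact absurd hij (lt_asymm hki))).le_bot ⟨hx, hxk⟩
  -- key second part
  have key : ∀ q : G → ℝ, IsMixedOn (C j) q → 0 ≤ payMM f (p i) q := by
    intro q hq
    rw [payMM_eq_sum]
    apply Finset.sum_nonneg
    intro y _
    by_cases hy : y ∈ C j
    · exact mul_nonneg (hq.1 y) (hoptA y (hCjA hy))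
    · rw [hq.2.1 y hy]; simp
  refine ⟨?_, key⟩
  -- p i is mixed on C i
  have hmixCi : IsMixedOn (C i) (p i) := by
    refine ⟨hmixA.1, ?_, hmixA.2.2⟩
    intro x hx
    rw [hsupp i] at hx
    exact le_antisymm (not_lt.mp hx) (hmixA.1 x)
  -- a mixed strategy on C j
  obtain ⟨y0, hy0⟩ := hne j
  set q0 : G → ℝ := fun x => if x = y0 then 1 else 0 with hq0def
  have hq0 : IsMixedOn (C j) q0 := by
    refine ⟨fun x => by by_cases h : x = y0 <;> simp [hq0def, h], ?_, by simp [hq0def]⟩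
    intro x hx
    simp only [hq0def, ite_eq_right_iff]
    intro h; subst h; exact absurd hy0 hx
  set M : ℝ := ∑ x, ∑ y, |f x y| with hM
  -- inner sets are bounded below by -M
  have hbdd : ∀ pp : G → ℝ, IsMixedOn (C i) pp →
      BddBelow ((fun q => payMM f pp q) '' {q | IsMixedOn (C j) q}) := by
    intro pp hpp
    refine ⟨-M, ?_⟩
    rintro a ⟨q, hq, rfl⟩
    have := payMM_abs_le f hpp hq
    linarith [neg_abs_le (payMM f pp q)]
  -- RPP ≥ 0
  have hmem : sInf ((fun q => payMM f (p i) q) '' {q | IsMixedOn (C j) q}) ∈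
      ((fun pp => sInf ((fun q => payMM f pp q) '' {q | IsMixedOn (C j) q})) ''
        {pp | IsMixedOn (C i) pp}) := ⟨p i, hmixCi, rfl⟩
  have hinf : 0 ≤ sInf ((fun q => payMM f (p i) q) '' {q | IsMixedOn (C j) q}) := by
    refine le_csInf ⟨payMM f (p i) q0, ⟨q0, hq0, rfl⟩⟩ ?_
    rintro a ⟨q, hq, rfl⟩
    exact key q hq
  refine le_csSup_of_le ?_ hmem hinf
  -- bounded above by M
  refine ⟨M, ?_⟩
  rintro a ⟨pp, hpp, rfl⟩
  have hle : sInf ((fun q => payMM f pp q) '' {q | IsMixedOn (C j) q}) ≤ payMM f pp q0 :=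
    csInf_le (hbdd pp hpp) ⟨q0, hq0, rfl⟩
  have := payMM_abs_le f hpp hq0
  linarith [le_abs_self (payMM f pp q0)]
end

section
/- Let C_1, …, C_r together with optimal mixed strategies p_1, …, p_r be a Nash clustering of a finite symmetric zero-sum game (Π, f). Suppose a population P ⊆ Π contains the entire cluster C_i (C_i ⊆ P), and suppose π ∈ Π beats every member of P, i.e. f(π, σ) > 0 for all σ ∈ P. Then π belongs to a strictly earlier cluster: there exists k < i with π ∈ C_k. -/
/-- If a population P contains an entire Nash cluster C_i and π beats
every member of P, then π belongs to a strictly earlier cluster. -/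
theorem beat_full_cluster_implies_earlier_cluster
    {G : Type*} [Fintype G] [Nonempty G]
    (f : G → G → ℝ) (hf : ∀ x y, f x y = - f y x)
    (r : ℕ) (C : Fin r → Set G) (p : Fin r → G → ℝ)
    (hne : ∀ i, (C i).Nonempty)
    (hdisj : ∀ i j, i ≠ j → Disjoint (C i) (C j))
    (hcover : ⋃ i, C i = Set.univ)
    (hopt : ∀ i : Fin r, IsOptimalOn f (Set.univ \ ⋃ j, ⋃ (_ : j < i), C j) (p i))
    (hsupp : ∀ i, C i = supp (p i))
    (P : Set G) (i : Fin r) (hCP : C i ⊆ P)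
    (π : G) (hbeat : ∀ σ ∈ P, 0 < f π σ) :
    ∃ k : Fin r, k < i ∧ π ∈ C k := by
  obtain ⟨⟨hpos, hzero, hsum⟩, hoptA⟩ := hopt i
  -- payMP f (p i) π < 0
  have hterm : ∀ x, p i x * f x π ≤ 0 := by
    intro x
    rcases lt_or_eq_of_le (hpos x) with hx | hx
    · have hxC : x ∈ C i := by rw [hsupp i]; exact hx
      have : 0 < f π x := hbeat x (hCP hxC)
      have hneg : f x π < 0 := by rw [hf x π]; linarith
      exact le_of_lt (mul_neg_of_pos_of_neg hx hneg)
    · rw [← hx]; simp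
  have hex : ∃ x, 0 < p i x := by
    by_contra h
    push_neg at h
    have : ∀ x, p i x = 0 := fun x => le_antisymm (h x) (hpos x)
    simp [this] at hsum
  obtain ⟨x₀, hx₀⟩ := hex
  have hx₀C : x₀ ∈ C i := by rw [hsupp i]; exact hx₀
  have hx₀neg : f x₀ π < 0 := by
    have : 0 < f π x₀ := hbeat x₀ (hCP hx₀C)
    rw [hf x₀ π]; linarith
  have hlt : payMP f (p i) π < 0 := by
    have := Finset.sum_lt_sum (f := fun x => p i x * f x π) (g := fun _ => (0 : ℝ))
      (fun x _ => hterm x) ⟨x₀, Finset.mem_univ x₀,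
        mul_neg_of_pos_of_neg hx₀ hx₀neg⟩
    simpa [payMP] using this
  have hnotA : π ∉ Set.univ \ ⋃ j, ⋃ (_ : j < i), C j := by
    intro hπ
    exact absurd (hoptA π hπ) (not_le.mpr hlt)
  have : π ∈ ⋃ j, ⋃ (_ : j < i), C j := by
    by_contra h
    exact hnotA ⟨Set.mem_univ π, h⟩
  simpa using this
end

section
/- In a k-layered finite symmetric zero-sum game with layers L_1, …, L_k (lower index meaning stronger), the support of any optimal mixed strategy p for the full game on Π is contained in the first layer: supp(p) ⊆ L_1. -/
/-- Auxiliary: a double sum of an antisymmetric expression over the same finset vanishes. -/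
lemma antisym_sum' {G : Type*} (f : G → G → ℝ) (hf : ∀ x y, f x y = - f y x)
    (p : G → ℝ) (s t : Finset G) (hst : s = t) :
    ∑ y ∈ s, ∑ x ∈ t, p y * (p x * f x y) = 0 := by
  subst hst
  have h : ∑ y ∈ s, ∑ x ∈ s, p y * (p x * f x y)
         = ∑ y ∈ s, ∑ x ∈ s, -(p y * (p x * f x y)) := by
    rw [Finset.sum_comm]
    refine Finset.sum_congr rfl fun a _ => Finset.sum_congr rfl fun b _ => ?_
    rw [hf a b]; ring
  have h2 : ∑ y ∈ s, ∑ x ∈ s, -(p y * (p x * f x y))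
      = - ∑ y ∈ s, ∑ x ∈ s, p y * (p x * f x y) := by
    simp
  linarith [h, h2]

/-- In a k-layered game, the support of any optimal mixed strategy for
the full game is contained in the first (strongest) layer. -/
theorem optimal_support_in_first_layer
    {G : Type*} [Fintype G] [Nonempty G]
    (f : G → G → ℝ) (hf : ∀ x y, f x y = - f y x)
    (k : ℕ) (hk : 0 < k) (L : Fin k → Set G)
    (hne : ∀ i, (L i).Nonempty)
    (hdisj : ∀ i j, i ≠ j → Disjoint (L i) (L j))
    (hcover : ⋃ i, L i = Set.univ)
    (hlayer : ∀ i j : Fin k, i < j → ∀ x ∈ L i, ∀ y ∈ L j, 0 < f x y)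
    (p : G → ℝ) (hopt : IsOptimalOn f Set.univ p) :
    supp p ⊆ L ⟨0, hk⟩ := by
  classical
  obtain ⟨⟨hpos, -, hsum⟩, hpay⟩ := hopt
  have hpay' : ∀ y, 0 ≤ payMP f p y := fun y => hpay y (Set.mem_univ y)
  -- total expected payoff of p against p is zero
  have hPP : ∑ y, p y * payMP f p y = 0 := by
    have h1 : ∑ y, p y * payMP f p y = ∑ y, ∑ x, p y * (p x * f x y) := by
      refine Finset.sum_congr rfl fun y _ => ?_
      rw [payMP, Finset.mul_sum]
    rw [h1]
    exact antisym_sum' f hf p _ _ rfl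
  -- on the support, the payoff against p is exactly zero
  have hzero : ∀ y, 0 < p y → payMP f p y = 0 := by
    intro y hy
    have hnn : ∀ i ∈ Finset.univ, 0 ≤ p i * payMP f p i :=
      fun i _ => mul_nonneg (hpos i) (hpay' i)
    have h := (Finset.sum_eq_zero_iff_of_nonneg hnn).mp hPP y (Finset.mem_univ y)
    rcases mul_eq_zero.mp h with h' | h'
    · exact absurd h' (ne_of_gt hy)
    · exact h'
  -- every point is in some layer
  have hmemL : ∀ x : G, ∃ i, x ∈ L i := by
    intro x
    have hx : x ∈ ⋃ i, L i := by rw [hcover]; trivial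
    exact Set.mem_iUnion.mp hx
  -- there is a point in the support
  have hex : ∃ x, 0 < p x := by
    by_contra hcon
    push_neg at hcon
    have : ∀ x, p x = 0 := fun x => le_antisymm (hcon x) (hpos x)
    simp [this] at hsum
  -- the set of layer indices meeting the support
  set I : Finset (Fin k) := Finset.univ.filter (fun i => ∃ x, 0 < p x ∧ x ∈ L i) with hI
  have hInem : I.Nonempty := by
    obtain ⟨x, hx⟩ := hex
    obtain ⟨i, hi⟩ := hmemL x
    exact ⟨i, by simp [hI]; exact ⟨x, hx, hi⟩⟩
  set m : Fin k := I.min' hInem with hm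
  have hmI : m ∈ I := I.min'_mem hInem
  obtain ⟨y0, hy0p, hy0L⟩ : ∃ y, 0 < p y ∧ y ∈ L m := by
    simpa [hI] using hmI
  have hmin : ∀ i ∈ I, m ≤ i := fun i hi => I.min'_le i hi
  -- f x y < 0 whenever y ∈ L m, p x > 0, x ∉ L m
  have hneg : ∀ x y, y ∈ L m → 0 < p x → x ∉ L m → f x y < 0 := by
    intro x y hyL hxp hxm
    obtain ⟨i, hiL⟩ := hmemL x
    have hiI : i ∈ I := by simp [hI]; exact ⟨x, hxp, hiL⟩
    have hmi : m ≤ i := hmin i hiI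
    have hne' : m ≠ i := fun h => hxm (h ▸ hiL)
    have hmlt : m < i := lt_of_le_of_ne hmi hne'
    have := hlayer m i hmlt y hyL x hiL
    rw [hf x y]; linarith
  -- the support is contained in L m
  have hsub : ∀ x, 0 < p x → x ∈ L m := by
    intro x hxp
    by_contra hxm
    set s : Finset G := Finset.univ.filter (fun y => y ∈ L m) with hs
    set s' : Finset G := Finset.univ.filter (fun y => ¬ y ∈ L m) with hs'
    have hy0s : y0 ∈ s := by simp [hs, hy0L]
    have hxs' : x ∈ s' := by simp [hs', hxm]
    have hT : ∑ y ∈ s, ∑ z, p y * (p z * f z y) = 0 := by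
      have : ∀ y ∈ s, ∑ z, p y * (p z * f z y) = 0 := by
        intro y _
        rcases eq_or_lt_of_le (hpos y) with h | h
        · refine Finset.sum_eq_zero fun z _ => by rw [← h]; ring
        · rw [← Finset.mul_sum]
          have := hzero y h
          rw [payMP] at this
          rw [this, mul_zero]
      exact Finset.sum_eq_zero this
    have hsplit : ∀ y : G, ∑ z, p y * (p z * f z y)
        = (∑ z ∈ s, p y * (p z * f z y)) + ∑ z ∈ s', p y * (p z * f z y) := by
      intro y
      rw [hs, hs']
      exact (Finset.sum_filter_add_sum_filter_not _ _ _).symm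
    have hT2 : ∑ y ∈ s, ∑ z ∈ s', p y * (p z * f z y) = 0 := by
      have h1 : ∑ y ∈ s, ((∑ z ∈ s, p y * (p z * f z y)) + ∑ z ∈ s', p y * (p z * f z y)) = 0 := by
        rw [← Finset.sum_congr rfl (fun y _ => hsplit y)]
        exact hT
      rw [Finset.sum_add_distrib] at h1
      have h2 : ∑ y ∈ s, ∑ z ∈ s, p y * (p z * f z y) = 0 :=
        antisym_sum' f hf p s s rfl
      linarith
    have hnonpos : ∀ y ∈ s, (∑ z ∈ s', p y * (p z * f z y)) ≤ 0 := by
      intro y hy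
      have hyL : y ∈ L m := by simpa [hs] using hy
      refine Finset.sum_nonpos fun z hz => ?_
      have hzm : z ∉ L m := by simpa [hs'] using hz
      rcases eq_or_lt_of_le (hpos z) with h | h
      · rw [← h]; simp
      · have hfz : f z y < 0 := hneg z y hyL h hzm
        have : p z * f z y ≤ 0 := mul_nonpos_of_nonneg_of_nonpos (le_of_lt h) (le_of_lt hfz)
        exact mul_nonpos_of_nonneg_of_nonpos (hpos y) this
    have hall : ∀ y ∈ s, (∑ z ∈ s', p y * (p z * f z y)) = 0 :=
      (Finset.sum_eq_zero_iff_of_nonpos hnonpos).mp hT2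
    have hy0sum : ∑ z ∈ s', p y0 * (p z * f z y0) = 0 := hall y0 hy0s
    have hnonpos' : ∀ z ∈ s', p y0 * (p z * f z y0) ≤ 0 := by
      intro z hz
      have hzm : z ∉ L m := by simpa [hs'] using hz
      rcases eq_or_lt_of_le (hpos z) with h | h
      · rw [← h]; simp
      · have hfz : f z y0 < 0 := hneg z y0 hy0L h hzm
        have : p z * f z y0 ≤ 0 := mul_nonpos_of_nonneg_of_nonpos (le_of_lt h) (le_of_lt hfz)
        exact mul_nonpos_of_nonneg_of_nonpos (hpos y0) this
    have hterm : p y0 * (p x * f x y0) = 0 :=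
      (Finset.sum_eq_zero_iff_of_nonpos hnonpos').mp hy0sum x hxs'
    have hfx : f x y0 < 0 := hneg x y0 hy0L hxp hxm
    rcases mul_eq_zero.mp hterm with h | h
    · exact absurd h (ne_of_gt hy0p)
    · rcases mul_eq_zero.mp h with h' | h'
      · exact absurd h' (ne_of_gt hxp)
      · exact absurd h' (ne_of_lt hfx)
  -- m must be the first layer
  have hm0 : m = ⟨0, hk⟩ := by
    by_contra hne'
    have hle : (⟨0, hk⟩ : Fin k) ≤ m := by
      rw [Fin.le_def]; exact Nat.zero_le _
    have hlt : (⟨0, hk⟩ : Fin k) < m := lt_of_le_of_ne hle (Ne.symm hne')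
    obtain ⟨z, hzL⟩ := hne ⟨0, hk⟩
    have hsum' : payMP f p z < 0 := by
      rw [payMP]
      have hle' : ∀ x ∈ Finset.univ, p x * f x z ≤ (0 : ℝ) := by
        intro x _
        rcases eq_or_lt_of_le (hpos x) with h | h
        · rw [← h]; simp
        · have hxL : x ∈ L m := hsub x h
          have := hlayer ⟨0, hk⟩ m hlt z hzL x hxL
          have hfx : f x z < 0 := by rw [hf x z]; linarith
          exact mul_nonpos_of_nonneg_of_nonpos (hpos x) (le_of_lt hfx)
      have hstrict : ∃ x ∈ Finset.univ, p x * f x z < (0 : ℝ) := by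
        refine ⟨y0, Finset.mem_univ y0, ?_⟩
        have hy0L' : y0 ∈ L m := hy0L
        have := hlayer ⟨0, hk⟩ m hlt z hzL y0 hy0L'
        have hfx : f y0 z < 0 := by rw [hf y0 z]; linarith
        exact mul_neg_of_pos_of_neg hy0p hfx
      calc ∑ x, p x * f x z < ∑ _x : G, (0 : ℝ) := by
            obtain ⟨x, hx, hx'⟩ := hstrict
            exact Finset.sum_lt_sum hle' ⟨x, hx, hx'⟩
        _ = 0 := by simp
    exact absurd (hpay' z) (not_le.mpr hsum')
  intro x hx
  have : 0 < p x := hx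
  rw [← hm0]
  exact hsub x this
end

section
/- Let Π be a finite nonempty set, W : Π × Π → ℝ and S : Π → ℝ, and let f be the associated Game-of-Skill payoff f(x,y) := (W(x,y) − W(y,x))/2 + S(x) − S(y). Suppose α > 0 and |W(x,y)| < α/2 for all x, y ∈ Π. Then for any optimal mixed strategy p of the game (Π, f), the transitive strengths within the support of p differ by at most α: for all a, b ∈ supp(p), |S(a) − S(b)| ≤ α. -/
/-- In a Game of Skill f(x,y) = (W(x,y)-W(y,x))/2 + S(x) - S(y) with
|W| < α/2, transitive strengths within the support of any optimal mixed strategy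
differ by at most α. -/
theorem skill_spread_in_nash_support
    {G : Type*} [Fintype G] [Nonempty G]
    (W : G → G → ℝ) (S : G → ℝ) (f : G → G → ℝ)
    (hfdef : ∀ x y, f x y = (W x y - W y x) / 2 + S x - S y)
    (α : ℝ) (hα : 0 < α) (hW : ∀ x y, |W x y| < α / 2)
    (p : G → ℝ) (hopt : IsOptimalOn f Set.univ p) :
    ∀ a b : G, a ∈ supp p → b ∈ supp p → |S a - S b| ≤ α := by
  obtain ⟨⟨hp0, _, hp1⟩, hopt2⟩ := hopt
  have hanti : ∀ x y : G, f y x = - f x y := by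
    intro x y; rw [hfdef, hfdef]; ring
  have hQ : ∑ y, p y * payMP f p y = 0 := by
    have key : (∑ y, p y * payMP f p y) + (∑ y, p y * payMP f p y) = 0 := by
      unfold payMP
      simp only [Finset.mul_sum]
      nth_rewrite 1 [Finset.sum_comm]
      rw [← Finset.sum_add_distrib]
      apply Finset.sum_eq_zero
      intro x _
      rw [← Finset.sum_add_distrib]
      apply Finset.sum_eq_zero
      intro y _
      rw [hanti x y]
      ring
    linarith
  have hzero : ∀ a ∈ supp p, payMP f p a = 0 := by
    intro a ha
    have hterm : ∀ y ∈ Finset.univ, 0 ≤ p y * payMP f p y :=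
      fun y _ => mul_nonneg (hp0 y) (hopt2 y trivial)
    have h := (Finset.sum_eq_zero_iff_of_nonneg hterm).mp hQ a (Finset.mem_univ a)
    have hpa : 0 < p a := ha
    exact (mul_eq_zero.mp h).resolve_left (ne_of_gt hpa)
  have hpay : ∀ y, payMP f p y =
      (∑ x, p x * ((W x y - W y x) / 2)) + (∑ x, p x * S x) - S y := by
    intro y
    unfold payMP
    have h1 : ∀ x ∈ Finset.univ, p x * f x y =
        p x * ((W x y - W y x) / 2) + p x * S x - p x * S y := by
      intro x _; rw [hfdef]; ring
    rw [Finset.sum_congr rfl h1, Finset.sum_sub_distrib, Finset.sum_add_distrib,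
      ← Finset.sum_mul, hp1, one_mul]
  have hT : ∀ y, |∑ x, p x * ((W x y - W y x) / 2)| ≤ α / 2 := by
    intro y
    calc |∑ x, p x * ((W x y - W y x) / 2)|
        ≤ ∑ x, |p x * ((W x y - W y x) / 2)| := Finset.abs_sum_le_sum_abs _ _
      _ ≤ ∑ x, p x * (α / 2) := by
          apply Finset.sum_le_sum
          intro x _
          rw [abs_mul, abs_of_nonneg (hp0 x)]
          apply mul_le_mul_of_nonneg_left _ (hp0 x)
          have h1 := abs_lt.mp (hW x y)
          have h2 := abs_lt.mp (hW y x)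
          rw [abs_le]; constructor <;> [linarith; linarith]
      _ = α / 2 := by rw [← Finset.sum_mul, hp1, one_mul]
  intro a b ha hb
  have hea := hzero a ha
  have heb := hzero b hb
  rw [hpay a] at hea
  rw [hpay b] at heb
  have hTa := abs_le.mp (hT a)
  have hTb := abs_le.mp (hT b)
  rw [abs_le]; constructor <;> [linarith; linarith]
end

section
/- Let B be a finite nonempty set, g0 : ℕ → ℝ and g1 : B → ℝ. Then the maximum over nonempty subsets A ⊆ B of g0(|A|) + min_{a∈A} g1(a) is attained by a 'top set': there exists a nonempty A* ⊆ B attaining this maximum such that g1(a) ≥ g1(b) for every a ∈ A* and every b ∈ B \ A*. -/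
open Finset

/-- For any `0 < k ≤ |B|` there is a "top set" of cardinality `k` in `B`. -/
lemma top_set_exists {β : Type*} [DecidableEq β] (g1 : β → ℝ) :
    ∀ (k : ℕ) (B : Finset β), 0 < k → k ≤ B.card →
      ∃ A : Finset β, A ⊆ B ∧ A.card = k ∧ ∀ a ∈ A, ∀ b ∈ B \ A, g1 b ≤ g1 a := by
  intro k
  induction k with
  | zero => intro B h; omega
  | succ n ih =>
    intro B _ hk
    have hB : B.Nonempty := card_pos.mp (lt_of_lt_of_le (Nat.succ_pos n) hk)
    obtain ⟨m, hm, hmax⟩ := B.exists_max_image g1 hB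
    by_cases hn : n = 0
    · subst hn
      refine ⟨{m}, by simpa using hm, by simp, ?_⟩
      intro a ha b hb
      simp only [mem_singleton] at ha
      subst ha
      exact hmax b (mem_sdiff.mp hb).1
    · obtain ⟨A', hsub, hcard, htop⟩ := ih (B.erase m) (Nat.pos_of_ne_zero hn)
        (by rw [card_erase_of_mem hm]; omega)
      have hmA' : m ∉ A' := fun h => (mem_erase.mp (hsub h)).1 rfl
      refine ⟨insert m A', ?_, ?_, ?_⟩
      · intro x hx
        rcases mem_insert.mp hx with h | h
        · exact h ▸ hm
        · exact erase_subset _ _ (hsub h)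
      · rw [card_insert_of_notMem hmA', hcard]
      · intro a ha b hb
        obtain ⟨hbB, hbA⟩ := mem_sdiff.mp hb
        rcases mem_insert.mp ha with h | h
        · exact h ▸ hmax b hbB
        · have hb' : b ∈ (B.erase m) \ A' := by
            refine mem_sdiff.mpr ⟨mem_erase.mpr ⟨?_, hbB⟩, ?_⟩
            · intro he; exact hbA (he ▸ mem_insert_self m A')
            · intro he; exact hbA (mem_insert_of_mem he)
          exact htop a h b hb'

/-- The maximum over nonempty subsets A ⊆ B of g0(|A|) + min_{a∈A} g1(a)
is attained by a "top set": a set whose elements all have g1-value at least that of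
every element outside it. -/
theorem max_attained_by_top_set
    {β : Type*} [DecidableEq β] (B : Finset β) (hB : B.Nonempty)
    (g0 : ℕ → ℝ) (g1 : β → ℝ) :
    ∃ (A : Finset β) (hA : A.Nonempty), A ⊆ B ∧
      (∀ A' : Finset β, A' ⊆ B → ∀ hA' : A'.Nonempty,
        g0 A'.card + A'.inf' hA' g1 ≤ g0 A.card + A.inf' hA g1) ∧
      (∀ a ∈ A, ∀ b ∈ B \ A, g1 b ≤ g1 a) := by
  classical
  set f : Finset β → ℝ :=
    fun A => if h : A.Nonempty then g0 A.card + A.inf' h g1 else 0 with hf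
  set S : Finset (Finset β) := B.powerset.filter (·.Nonempty) with hS
  have hSne : S.Nonempty := ⟨B, by simp [hS, hB]⟩
  obtain ⟨A₀, hA₀S, hmaxf⟩ := S.exists_max_image f hSne
  simp only [hS, mem_filter, mem_powerset] at hA₀S
  obtain ⟨hA₀B, hA₀ne⟩ := hA₀S
  -- top set of the same cardinality
  obtain ⟨A, hAB, hAcard, hAtop⟩ := top_set_exists g1 A₀.card B
    (card_pos.mpr hA₀ne) (card_le_card hA₀B)
  have hAne : A.Nonempty := card_pos.mp (hAcard ▸ card_pos.mpr hA₀ne)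
  -- min over any subset of B with the same card is ≤ min over A
  have key : ∀ A'' : Finset β, A'' ⊆ B → A''.card = A.card → ∀ h'' : A''.Nonempty,
      A''.inf' h'' g1 ≤ A.inf' hAne g1 := by
    intro A'' hsub hcard h''
    by_cases heq : A'' = A
    · subst heq; rfl
    · have : ¬ A'' ⊆ A := fun hss => heq (Finset.eq_of_subset_of_card_le hss hcard.ge)
      obtain ⟨a, haA'', haA⟩ := not_subset.mp this
      calc A''.inf' h'' g1 ≤ g1 a := inf'_le _ haA''
        _ ≤ A.inf' hAne g1 := by
          apply le_inf'
          intro x hx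
          exact hAtop x hx a (mem_sdiff.mpr ⟨hsub haA'', haA⟩)
  refine ⟨A, hAne, hAB, ?_, hAtop⟩
  intro A' hA'B hA'ne
  have h1 : f A' ≤ f A₀ := hmaxf A' (by simp [hS, mem_filter, mem_powerset, hA'B, hA'ne])
  have h2 : g0 A₀.card + A₀.inf' hA₀ne g1 ≤ g0 A.card + A.inf' hAne g1 := by
    rw [hAcard]
    exact add_le_add_right (key A₀ hA₀B hAcard.symm hA₀ne) _
  simp only [hf, dif_pos hA'ne, dif_pos hA₀ne] at h1
  linarith
end
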